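/- Fix 0 < β ≤ 1, and let κ_β(x) = β/(β² − x²) and κ₁(x) = 1/(1 − x²). Then for every x ∈ (−1,1): (a) the series defining T_β κ_β(x) has only positive terms, converges, and T_β κ_β(x) = 1/(1 − x²); (b) 0 ≤ T_β κ₁(x) ≤ β/(1 − x²). In particular, for β = 1 one has T₁ κ₁ = κ₁, i.e., κ₁ is an invariant density (of infinite total mass) for the Gauss-type map x ↦ {−1/x} mod 2ℤ. -/

import Mathlib

open Real

/-- The subtransfer operator `T_β` of the Gauss-type map `x ↦ {-β/x} mod 2ℤ`. -/
noncomputable def Tsub (β : ℝ) (f : ℝ → ℝ) (x : ℝ) : ℝ :=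
  ∑' j : {j : ℤ // j ≠ 0},
    (β / (2 * ((j : ℤ) : ℝ) + x) ^ 2) * f (-β / (2 * ((j : ℤ) : ℝ) + x))


private lemma eq1' (β A : ℝ) (hβ : 0 < β) (h2 : 1 < A ^ 2) :
    β / A ^ 2 * (β / (β ^ 2 - (-β / A) ^ 2)) = 1 / (A ^ 2 - 1) := by
  have h0 : A ≠ 0 := by intro h; rw [h] at h2; norm_num at h2
  have hA1 : A ^ 2 - 1 ≠ 0 := ne_of_gt (by linarith)
  have hβ0 : β ≠ 0 := ne_of_gt hβ
  have hd : β ^ 2 - (-β / A) ^ 2 ≠ 0 := by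
    have he : β ^ 2 - (-β / A) ^ 2 = β ^ 2 * (A ^ 2 - 1) / A ^ 2 := by
      field_simp
    rw [he]
    exact div_ne_zero (mul_ne_zero (pow_ne_zero _ hβ0) hA1) (pow_ne_zero _ h0)
  have hc : -(β ^ 2 * A ^ 2) + β ^ 2 * A ^ 4 ≠ 0 := by
    have he : -(β ^ 2 * A ^ 2) + β ^ 2 * A ^ 4 = β ^ 2 * A ^ 2 * (A ^ 2 - 1) := by ring
    rw [he]
    exact mul_ne_zero (mul_ne_zero (pow_ne_zero _ hβ0) (pow_ne_zero _ h0)) hA1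
  field_simp

private lemma eq2' (β A : ℝ) (hβ : 0 < β) (hβ1 : β ≤ 1) (h2 : 1 < A ^ 2) :
    β / A ^ 2 * (1 / (1 - (-β / A) ^ 2)) = β / (A ^ 2 - β ^ 2) := by
  have h0 : A ≠ 0 := by intro h; rw [h] at h2; norm_num at h2
  have hβ2 : β ^ 2 ≤ 1 := by nlinarith
  have hAβ : A ^ 2 - β ^ 2 ≠ 0 := ne_of_gt (by linarith)
  have hd : 1 - (-β / A) ^ 2 ≠ 0 := by
    have he : 1 - (-β / A) ^ 2 = (A ^ 2 - β ^ 2) / A ^ 2 := by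
      field_simp
    rw [he]
    exact div_ne_zero hAβ (pow_ne_zero _ h0)
  field_simp
open Filter

private lemma telescope (x : ℝ) (hx : x ∈ Set.Ioo (-1 : ℝ) 1) :
    HasSum (fun n : ℕ => 1 / ((2 * ((n : ℝ) + 1) + x) ^ 2 - 1)) (1 / (2 * (1 + x))) := by
  obtain ⟨hx1, hx2⟩ := hx
  have hpos : ∀ n : ℕ, (0:ℝ) < 2 * (n:ℝ) + 1 + x := by
    intro n; have : (0:ℝ) ≤ n := n.cast_nonneg; nlinarith
  set u : ℕ → ℝ := fun n => (1/2) / (2 * (n:ℝ) + 1 + x) with hu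
  have hterm : ∀ n : ℕ, 1 / ((2 * ((n : ℝ) + 1) + x) ^ 2 - 1) = u n - u (n + 1) := by
    intro n
    have h1 := hpos n
    have h2 := hpos (n+1)
    push_cast at h2
    have h3 : (2 * ((n : ℝ) + 1) + x) ^ 2 - 1 ≠ 0 := by nlinarith
    simp only [hu]
    push_cast
    field_simp
    ring
  have hnn : ∀ n : ℕ, 0 ≤ 1 / ((2 * ((n : ℝ) + 1) + x) ^ 2 - 1) := by
    intro n
    have h2 := hpos (n+1); push_cast at h2
    exact le_of_lt (div_pos one_pos (by nlinarith))
  rw [hasSum_iff_tendsto_nat_of_nonneg hnn]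
  have hps : (fun n => ∑ i ∈ Finset.range n, 1 / ((2 * ((i : ℝ) + 1) + x) ^ 2 - 1))
      = fun n => u 0 - u n := by
    funext n
    simp only [hterm]
    exact Finset.sum_range_sub' u n
  rw [hps]
  have hlim : Tendsto u atTop (nhds 0) := by
    have h1 : Tendsto (fun n : ℕ => 2 * (n:ℝ) + 1 + x) atTop atTop := by
      apply tendsto_atTop_add_const_right
      apply tendsto_atTop_add_const_right
      exact (tendsto_natCast_atTop_atTop).const_mul_atTop two_pos
    have h2 := h1.inv_tendsto_atTop
    have h3 := h2.const_mul (1/2 : ℝ)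
    simpa [hu, div_eq_mul_inv] using h3
  have : u 0 = 1 / (2 * (1 + x)) := by
    simp only [hu]
    rw [div_div]
    norm_num
  rw [← this]
  simpa using tendsto_const_nhds.sub hlim
private noncomputable def Faux (x : ℝ) : ℤ → ℝ :=
  fun j => if j = 0 then 0 else 1 / ((2 * (j : ℝ) + x) ^ 2 - 1)

private lemma key (x : ℝ) (hx : x ∈ Set.Ioo (-1 : ℝ) 1) :
    HasSum (fun j : {j : ℤ // j ≠ 0} => 1 / ((2 * ((j : ℤ) : ℝ) + x) ^ 2 - 1))
      (1 / (1 - x ^ 2)) := by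
  obtain ⟨hx1, hx2⟩ := hx
  have hposs : HasSum (fun n : ℕ => Faux x ((n : ℤ) + 1)) (1 / (2 * (1 + x))) := by
    have h := telescope x ⟨hx1, hx2⟩
    have he : (fun n : ℕ => Faux x ((n : ℤ) + 1))
        = fun n : ℕ => 1 / ((2 * ((n : ℝ) + 1) + x) ^ 2 - 1) := by
      funext n
      rw [Faux, if_neg (by omega)]
      push_cast
      ring_nf
    rw [he]; exact h
  have hnegs : HasSum (fun n : ℕ => Faux x (-((n : ℤ) + 1))) (1 / (2 * (1 - x))) := by
    have h := telescope (-x) ⟨by linarith, by linarith⟩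
    have he : (fun n : ℕ => Faux x (-((n : ℤ) + 1)))
        = fun n : ℕ => 1 / ((2 * ((n : ℝ) + 1) + -x) ^ 2 - 1) := by
      funext n
      rw [Faux, if_neg (by omega)]
      push_cast
      ring_nf
    rw [he]
    convert h using 2
    ring
  have hFsum : HasSum (Faux x) (1 / (2 * (1 + x)) + 1 / (2 * (1 - x))) := by
    refine HasSum.of_nat_of_neg_add_one ?_ hnegs
    have h1 : HasSum (fun n : ℕ => (fun m : ℕ => Faux x (m : ℤ)) (n + 1)) (1 / (2 * (1 + x))) := by
      have he : (fun n : ℕ => (fun m : ℕ => Faux x (m : ℤ)) (n + 1))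
          = fun n : ℕ => Faux x ((n : ℤ) + 1) := by
        funext n; push_cast; ring_nf
      rw [he]; exact hposs
    have h2 := (hasSum_nat_add_iff (f := fun m : ℕ => Faux x (m : ℤ)) (g := 1 / (2 * (1 + x))) 1).mp h1
    have h0 : Faux x 0 = 0 := by rw [Faux]; norm_num
    simpa [h0] using h2
  have hval : 1 / (2 * (1 + x)) + 1 / (2 * (1 - x)) = 1 / (1 - x ^ 2) := by
    have h1 : (1:ℝ) + x ≠ 0 := by linarith
    have h2 : (1:ℝ) - x ≠ 0 := by linarith
    have h3 : (1:ℝ) - x ^ 2 ≠ 0 := by nlinarith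
    field_simp
    ring
  rw [hval] at hFsum
  have hsupp : Function.support (Faux x) ⊆ {j : ℤ | j ≠ 0} := by
    intro j hj
    simp only [Function.mem_support] at hj
    intro h
    exact hj (by rw [Faux, if_pos h])
  have h := (hasSum_subtype_iff_of_support_subset hsupp).mpr hFsum
  have he : (Faux x ∘ (Subtype.val : {j : ℤ // j ≠ 0} → ℤ))
      = fun j : {j : ℤ // j ≠ 0} => 1 / ((2 * ((j : ℤ) : ℝ) + x) ^ 2 - 1) := by
    funext j
    simp only [Function.comp_apply]
    rw [Faux, if_neg j.2]
  have h2 : HasSum (fun j : {j : ℤ // j ≠ 0} => 1 / ((2 * ((j : ℤ) : ℝ) + x) ^ 2 - 1))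
      (1 / (1 - x ^ 2)) := he ▸ h
  exact h2


/-- `T_β κ_β = κ₁` (with positive terms, convergent series) and
`0 ≤ T_β κ₁ ≤ β κ₁`; in particular `κ₁` is an invariant density for `β = 1`. -/
theorem stmt_16 (β : ℝ) (hβ0 : 0 < β) (hβ1 : β ≤ 1) :
    ∀ x ∈ Set.Ioo (-1 : ℝ) 1,
      (∀ j : {j : ℤ // j ≠ 0},
        0 < (β / (2 * ((j : ℤ) : ℝ) + x) ^ 2) *
          (β / (β ^ 2 - (-β / (2 * ((j : ℤ) : ℝ) + x)) ^ 2))) ∧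
      Summable (fun j : {j : ℤ // j ≠ 0} =>
        (β / (2 * ((j : ℤ) : ℝ) + x) ^ 2) *
          (β / (β ^ 2 - (-β / (2 * ((j : ℤ) : ℝ) + x)) ^ 2))) ∧
      Tsub β (fun y => β / (β ^ 2 - y ^ 2)) x = 1 / (1 - x ^ 2) ∧
      0 ≤ Tsub β (fun y => 1 / (1 - y ^ 2)) x ∧
      Tsub β (fun y => 1 / (1 - y ^ 2)) x ≤ β / (1 - x ^ 2) ∧
      (β = 1 → Tsub β (fun y => 1 / (1 - y ^ 2)) x = 1 / (1 - x ^ 2)) := by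
  intro x hx
  obtain ⟨hx1, hx2⟩ := hx
  have hkey := key x ⟨hx1, hx2⟩
  have hA2 : ∀ j : {j : ℤ // j ≠ 0}, 1 < (2 * ((j : ℤ) : ℝ) + x) ^ 2 := by
    rintro ⟨j, hj⟩
    rcases lt_or_gt_of_ne hj with h | h
    · have hjr : (j : ℝ) ≤ -1 := by exact_mod_cast (by omega : j ≤ -1)
      nlinarith
    · have hjr : (1 : ℝ) ≤ j := by exact_mod_cast (by omega : 1 ≤ j)
      nlinarith
  have eq1 : ∀ j : {j : ℤ // j ≠ 0},
      (β / (2 * ((j : ℤ) : ℝ) + x) ^ 2) *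
        (β / (β ^ 2 - (-β / (2 * ((j : ℤ) : ℝ) + x)) ^ 2))
      = 1 / ((2 * ((j : ℤ) : ℝ) + x) ^ 2 - 1) :=
    fun j => eq1' β _ hβ0 (hA2 j)
  have eq2 : ∀ j : {j : ℤ // j ≠ 0},
      (β / (2 * ((j : ℤ) : ℝ) + x) ^ 2) *
        (1 / (1 - (-β / (2 * ((j : ℤ) : ℝ) + x)) ^ 2))
      = β / ((2 * ((j : ℤ) : ℝ) + x) ^ 2 - β ^ 2) :=
    fun j => eq2' β _ hβ0 hβ1 (hA2 j)
  have hpos2 : ∀ j : {j : ℤ // j ≠ 0}, (0:ℝ) < (2 * ((j : ℤ) : ℝ) + x) ^ 2 - β ^ 2 := by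
    intro j
    nlinarith [hA2 j]
  refine ⟨?_, ?_, ?_, ?_, ?_, ?_⟩
  · intro j
    rw [eq1 j]
    exact div_pos one_pos (by linarith [hA2 j])
  · exact hkey.summable.congr fun j => (eq1 j).symm
  · rw [Tsub, tsum_congr eq1]
    exact hkey.tsum_eq
  · rw [Tsub, tsum_congr eq2]
    exact tsum_nonneg fun j => le_of_lt (div_pos hβ0 (hpos2 j))
  · have hle : ∀ j : {j : ℤ // j ≠ 0},
        β / ((2 * ((j : ℤ) : ℝ) + x) ^ 2 - β ^ 2)
          ≤ β * (1 / ((2 * ((j : ℤ) : ℝ) + x) ^ 2 - 1)) := by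
      intro j
      have h2 := hA2 j
      have hβ2 : β ^ 2 ≤ 1 := by nlinarith
      rw [mul_one_div]
      exact div_le_div_of_nonneg_left (le_of_lt hβ0) (by linarith) (by linarith)
    have hnn : ∀ j : {j : ℤ // j ≠ 0},
        0 ≤ β / ((2 * ((j : ℤ) : ℝ) + x) ^ 2 - β ^ 2) :=
      fun j => le_of_lt (div_pos hβ0 (hpos2 j))
    have hsumβ : Summable (fun j : {j : ℤ // j ≠ 0} =>
        β * (1 / ((2 * ((j : ℤ) : ℝ) + x) ^ 2 - 1))) := hkey.summable.mul_left β
    have hsum1 : Summable (fun j : {j : ℤ // j ≠ 0} =>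
        β / ((2 * ((j : ℤ) : ℝ) + x) ^ 2 - β ^ 2)) :=
      Summable.of_nonneg_of_le hnn hle hsumβ
    rw [Tsub, tsum_congr eq2]
    calc ∑' j : {j : ℤ // j ≠ 0}, β / ((2 * ((j : ℤ) : ℝ) + x) ^ 2 - β ^ 2)
        ≤ ∑' j : {j : ℤ // j ≠ 0}, β * (1 / ((2 * ((j : ℤ) : ℝ) + x) ^ 2 - 1)) :=
          Summable.tsum_le_tsum hle hsum1 hsumβ
      _ = β * (1 / (1 - x ^ 2)) := by rw [tsum_mul_left, hkey.tsum_eq]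
      _ = β / (1 - x ^ 2) := by rw [mul_one_div]
  · intro hβ
    subst hβ
    rw [Tsub, tsum_congr eq2]
    simp only [one_pow]
    exact hkey.tsum_eq
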